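/- Let R be a unital ring and a, b, c ∈ R. There exist x, p, q, r ∈ R such that xq + r = a, p - q - r = b, and -p + q - qx = c if and only if a + b + c is a commutator (i.e., a + b + c = xy - yx for some x, y ∈ R). -/
import Mathlib

theorem stmt_0 (R : Type*) [Ring R] (a b c : R) :
    (∃ x p q r : R, x * q + r = a ∧ p - q - r = b ∧ -p + q - q * x = c) ↔
      ∃ x y : R, a + b + c = x * y - y * x := by
  constructor
  · rintro ⟨x, p, q, r, h1, h2, h3⟩
    exact ⟨x, q, by rw [← h1, ← h2, ← h3]; abel⟩
  · rintro ⟨x, y, h⟩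
    exact ⟨x, b + y + (a - x * y), y, a - x * y, by abel, by abel,
      by rw [show -(b + y + (a - x * y)) + y - y * x = -b - a + (x * y - y * x) by abel, ← h]; abel⟩
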